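/- Let $k$ be a field, $m\ge 0$, and let $V=S_m\subset k[x]$ be the space of polynomials of degree at most $m$ (identified with $H^0(\mathbb{P}^1,\mathcal{O}(m))$ via a basis $1,x,\dots,x^m$). Consider the map $\alpha_1: k\langle 1,x\rangle \otimes S_2(V)\to S_{m+1}\otimes S_m$ defined by $\alpha_1(h\otimes t)=(\mu_h\otimes \mathrm{id})(t)$ where $\mu_h$ is multiplication by $h$ on the first tensor factor. Then $\alpha_1$ is surjective. -/
import Mathlib


open Polynomial TensorProduct

noncomputable section

variable (k : Type*) [Field k]

/-- polynomials of degree at most `d` in one variable. -/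
abbrev degLE (d : ℕ) : Submodule k (Polynomial k) := Polynomial.degreeLE k d

/-- the flip on `k[x] ⊗ k[x]`. -/
def flipMap : Polynomial k ⊗[k] Polynomial k →ₗ[k] Polynomial k ⊗[k] Polynomial k :=
  (TensorProduct.comm k _ _).toLinearMap

/-- `S_2(V)` for `V = S_m` the polynomials of degree `≤ m`: the symmetric tensors
inside `S_m ⊗ S_m 
 ⊆ k[x] ⊗ k[x]`. -/
def symTensors (m : ℕ) : Submodule k (Polynomial k ⊗[k] Polynomial k) :=
  (Submodule.map₂ (TensorProduct.mk k _ _) (degLE k m) (degLE k m)) ⊓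
    LinearMap.ker (flipMap k - LinearMap.id)

namespace AlphaAux

variable {k}

lemma xpow_mem_degLE {a d : ℕ} (h : a ≤ d) : (X : Polynomial k) ^ a ∈ degLE k d := by
  rw [Polynomial.mem_degreeLE, Polynomial.degree_X_pow]
  exact_mod_cast h

lemma diag_mem {m a : ℕ} (ha : a ≤ m) :
    ((X : Polynomial k) ^ a) ⊗ₜ[k] ((X : Polynomial k) ^ a) ∈ symTensors k m := by
  refine Submodule.mem_inf.mpr ⟨Submodule.apply_mem_map₂ _ (xpow_mem_degLE ha) (xpow_mem_degLE ha), ?_⟩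
  simp [LinearMap.mem_ker, flipMap, LinearMap.sub_apply, TensorProduct.comm_tmul]

lemma sym_mem {m a b : ℕ} (ha : a ≤ m) (hb : b ≤ m) :
    ((X : Polynomial k) ^ a) ⊗ₜ[k] ((X : Polynomial k) ^ b) +
      ((X : Polynomial k) ^ b) ⊗ₜ[k] ((X : Polynomial k) ^ a) ∈ symTensors k m := by
  refine Submodule.mem_inf.mpr ⟨add_mem (Submodule.apply_mem_map₂ _ (xpow_mem_degLE ha) (xpow_mem_degLE hb))
    (Submodule.apply_mem_map₂ _ (xpow_mem_degLE hb) (xpow_mem_degLE ha)), ?_⟩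
  rw [LinearMap.mem_ker, LinearMap.sub_apply, LinearMap.id_apply, sub_eq_zero]
  simp only [flipMap, LinearEquiv.coe_coe, map_add, TensorProduct.comm_tmul]
  abel

lemma one_mem_degLE1 : (1 : Polynomial k) ∈ degLE k 1 := by
  rw [Polynomial.mem_degreeLE, Polynomial.degree_one]
  exact zero_le_one

lemma X_mem_degLE1 : (X : Polynomial k) ∈ degLE k 1 := by
  rw [Polynomial.mem_degreeLE, Polynomial.degree_X]
  exact_mod_cast le_rfl

/-- The span in the statement. -/
def L (m : ℕ) : Submodule k (Polynomial k ⊗[k] Polynomial k) :=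
  Submodule.span k
    {z : Polynomial k ⊗[k] Polynomial k |
      ∃ h ∈ degLE k 1, ∃ t ∈ symTensors k m,
        z = LinearMap.rTensor _ (LinearMap.mulLeft k h) t}

lemma mono_mem (m : ℕ) : ∀ (n a b : ℕ),
    (if b ≤ a then 2 * (a - b) else 2 * (b - a) + 1) ≤ n → a ≤ m + 1 → b ≤ m →
    ((X : Polynomial k) ^ a) ⊗ₜ[k] ((X : Polynomial k) ^ b) ∈ L (k := k) m := by
  intro n
  induction n with
  | zero =>
    intro a b hn ha hb
    have hab : a = b := by split at hn <;> omega
    subst hab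
    refine Submodule.subset_span ⟨1, one_mem_degLE1, _, diag_mem hb, ?_⟩
    simp [LinearMap.rTensor_tmul]
  | succ n ih =>
    intro a b hn ha hb
    by_cases hab : a = b
    · subst hab
      refine Submodule.subset_span ⟨1, one_mem_degLE1, _, diag_mem hb, ?_⟩
      simp [LinearMap.rTensor_tmul]
    by_cases hab1 : a = b + 1
    · subst hab1
      refine Submodule.subset_span ⟨X, X_mem_degLE1, _, diag_mem hb, ?_⟩
      simp [LinearMap.rTensor_tmul, LinearMap.mulLeft_apply, ← pow_succ']
    rcases lt_or_ge a b with hlt | hge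
    · have hg : ((X : Polynomial k) ^ a) ⊗ₜ[k] ((X : Polynomial k) ^ b) +
          ((X : Polynomial k) ^ b) ⊗ₜ[k] ((X : Polynomial k) ^ a) ∈ L (k := k) m :=
        Submodule.subset_span ⟨1, one_mem_degLE1, _, sym_mem (hlt.le.trans hb) hb, by
          simp [LinearMap.rTensor_tmul]⟩
      have h2 : ((X : Polynomial k) ^ b) ⊗ₜ[k] ((X : Polynomial k) ^ a) ∈ L (k := k) m :=
        ih b a (by split at hn <;> split <;> omega) (hb.trans (Nat.le_succ m))
          (hlt.le.trans hb)
      simpa using sub_mem hg h2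
    · obtain ⟨c, rfl⟩ : ∃ c, a = b + 2 + c := ⟨a - b - 2, by omega⟩
      have hg : ((X : Polynomial k) ^ (b + 2 + c)) ⊗ₜ[k] ((X : Polynomial k) ^ b) +
          ((X : Polynomial k) ^ (b + 1)) ⊗ₜ[k] ((X : Polynomial k) ^ (b + 1 + c)) ∈
          L (k := k) m := by
        refine Submodule.subset_span
          ⟨X, X_mem_degLE1, _, sym_mem (show b + 1 + c ≤ m by omega) hb, ?_⟩
        rw [show b + 2 + c = (b + 1 + c) + 1 by omega]
        simp [LinearMap.rTensor_tmul, LinearMap.mulLeft_apply, ← pow_succ']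
      have h2 : ((X : Polynomial k) ^ (b + 1)) ⊗ₜ[k] ((X : Polynomial k) ^ (b + 1 + c)) ∈
          L (k := k) m :=
        ih (b + 1) (b + 1 + c) (by split at hn <;> split <;> omega) (by omega) (by omega)
      simpa using sub_mem hg h2

end AlphaAux


open AlphaAux in
/-- the map `α₁ : k⟨1,x⟩ ⊗ S_2(S_m) → S_{m+1} ⊗ S_m`,
`h ⊗ t ↦ (μ_h ⊗ id)(t)` (multiplication by `h` on the first tensor factor),
is surjective. -/
theorem alpha_one_surjective (m : ℕ) :
    Submodule.span k
        {z : Polynomial k ⊗[k] Polynomial k |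
          ∃ h ∈ degLE k 1, ∃ t ∈ symTensors k m,
            z = LinearMap.rTensor _ (LinearMap.mulLeft k h) t} =
      Submodule.map₂ (TensorProduct.mk k _ _) (degLE k (m + 1)) (degLE k m) := by
  classical
  apply le_antisymm
  · rw [Submodule.span_le]
    rintro z ⟨h, hh, t, ht, rfl⟩
    have htm : t ∈ Submodule.map₂ (TensorProduct.mk k _ _) (degLE k m) (degLE k m) :=
      (Submodule.mem_inf.mp ht).1
    have hmap : Submodule.map (LinearMap.rTensor (Polynomial k) (LinearMap.mulLeft k h))
        (Submodule.map₂ (TensorProduct.mk k _ _) (degLE k m) (degLE k m)) ≤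
        Submodule.map₂ (TensorProduct.mk k _ _) (degLE k (m + 1)) (degLE k m) := by
      rw [Submodule.map_le_iff_le_comap]
      refine Submodule.map₂_le.mpr fun p hp q hq => ?_
      simp only [Submodule.mem_comap, TensorProduct.mk_apply, LinearMap.rTensor_tmul,
        LinearMap.mulLeft_apply]
      refine Submodule.apply_mem_map₂ _ ?_ hq
      rw [Polynomial.mem_degreeLE] at hh hp ⊢
      refine le_trans (Polynomial.degree_mul_le _ _) (le_trans (add_le_add hh hp) ?_)
      norm_cast
      omega
    exact hmap ⟨t, htm, rfl⟩
  · refine Submodule.map₂_le.mpr fun p hp q hq => ?_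
    have key : ∀ i ≤ m + 1, ((X : Polynomial k) ^ i) ⊗ₜ[k] q ∈
        Submodule.span k
          {z : Polynomial k ⊗[k] Polynomial k |
            ∃ h ∈ degLE k 1, ∃ t ∈ symTensors k m,
              z = LinearMap.rTensor _ (LinearMap.mulLeft k h) t} := by
      intro i hi
      rw [show degLE k m = Polynomial.degreeLE k (m : ℕ) from rfl,
        Polynomial.degreeLE_eq_span_X_pow] at hq
      induction hq using Submodule.span_induction with
      | mem x hx =>
        obtain ⟨j, hj, rfl⟩ := Finset.mem_image.mp hx
        rw [Finset.mem_range] at hj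
        exact mono_mem m (2 * (m + 1) + 1) i j (by split <;> omega) hi (by omega)
      | zero => simp
      | add x y _ _ hx hy => rw [TensorProduct.tmul_add]; exact add_mem hx hy
      | smul a x _ hx => rw [TensorProduct.tmul_smul]; exact Submodule.smul_mem _ _ hx
    rw [show degLE k (m + 1) = Polynomial.degreeLE k ((m + 1 : ℕ) : WithBot ℕ) from rfl,
      Polynomial.degreeLE_eq_span_X_pow] at hp
    induction hp using Submodule.span_induction with
    | mem x hx =>
      obtain ⟨j, hj, rfl⟩ := Finset.mem_image.mp hx
      rw [Finset.mem_range] at hj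
      exact key j (by omega)
    | zero => simp
    | add x y _ _ hx hy =>
      simp only [map_add, LinearMap.add_apply]; exact add_mem hx hy
    | smul a x _ hx =>
      simp only [map_smul, LinearMap.smul_apply]; exact Submodule.smul_mem _ _ hx
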